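/- For every θ > 0, the internal path length I_n^{(θ)} of a Hoppe tree with n nodes and parameter θ has variance Var(I_n^{(θ)}) = (2/(θ+1) − Ψ₁(θ+1)) n² + o(n²) as n → ∞, where Ψ₁ denotes the trigamma function (the second derivative of log Γ). -/

import Mathlib

open MeasureTheory ProbabilityTheory Real Filter Topology

noncomputable section

/-- Depth of node `i` in the Hoppe tree grown from the parent choices `U`:
`U k ω` is the parent of node `k + 2` (a node in `{1, …, k + 1}`, almost surely);
node `1` is the root. The `min` clipping is irrelevant almost surely. -/
def hoppeDepth {Ω : Type*} (U : ℕ → Ω → ℕ) (ω : Ω) : ℕ → ℕ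
  | 0 => 0
  | 1 => 0
  | n + 2 => hoppeDepth U ω (min (U n ω) (n + 1)) + 1
  decreasing_by omega

/-- The parent choices of a Hoppe tree with parameter `θ`: `U k` is the (random) parent
of node `k + 2`, the choices being independent, node `k + 2` choosing its parent among
nodes `1, …, k + 1`, namely the root `1` with probability `θ / (θ + k)` and each other
node with probability `1 / (θ + k)`. -/
structure IsHoppeParents {Ω : Type*} [MeasurableSpace Ω] (θ : ℝ) (μ : Measure Ω)
    (U : ℕ → Ω → ℕ) : Prop where
  meas : ∀ k, Measurable (U k)
  indep : iIndepFun U μ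
  root : ∀ k : ℕ, μ {ω | U k ω = 1} = ENNReal.ofReal (θ / (θ + k))
  nonroot : ∀ k j : ℕ, 2 ≤ j → j ≤ k + 1 → μ {ω | U k ω = j} = ENNReal.ofReal (1 / (θ + k))
  range : ∀ k : ℕ, μ {ω | 1 ≤ U k ω ∧ U k ω ≤ k + 1} = 1

/-- Height of the Hoppe tree with `n` nodes: maximal depth over nodes `1, …, n`. -/
def hoppeHeight {Ω : Type*} (U : ℕ → Ω → ℕ) (ω : Ω) (n : ℕ) : ℕ :=
  (Finset.Icc 1 n).sup (fun i => hoppeDepth U ω i)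

/-- Internal path length of the Hoppe tree with `n` nodes: sum of the depths of
nodes `1, …, n`. -/
def hoppePathLength {Ω : Type*} (U : ℕ → Ω → ℕ) (ω : Ω) (n : ℕ) : ℕ :=
  ∑ i ∈ Finset.Icc 1 n, hoppeDepth U ω i

/-- Number of leaves of the Hoppe tree with `n` nodes: nodes `j ∈ {1, …, n}` that are
the parent of no node `k ∈ {2, …, n}`. -/
def hoppeLeafCount {Ω : Type*} (U : ℕ → Ω → ℕ) (ω : Ω) (n : ℕ) : ℕ :=
  ((Finset.Icc 1 n).filter (fun j : ℕ => ∀ k ∈ Finset.Icc (2 : ℕ) n, U (k - 2) ω ≠ j)).card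

set_option linter.unusedSectionVars false

namespace HoppeAux

def depthFun (u : ℕ → ℕ) : ℕ → ℕ
  | 0 => 0
  | 1 => 0
  | n + 2 => depthFun u (min (u n) (n + 1)) + 1
  decreasing_by omega

lemma hoppeDepth_eq_depthFun {Ω : Type*} (U : ℕ → Ω → ℕ) (ω : Ω) (i : ℕ) :
    hoppeDepth U ω i = depthFun (fun k => U k ω) i := by
  induction i using Nat.strong_induction_on with
  | _ i ih =>
    match i with
    | 0 => simp [hoppeDepth, depthFun]
    | 1 => simp [hoppeDepth, depthFun]
    | n + 2 =>
      rw [hoppeDepth, depthFun, ih _ (by omega)]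

lemma depthFun_le (u : ℕ → ℕ) (i : ℕ) : depthFun u i ≤ i := by
  induction i using Nat.strong_induction_on with
  | _ i ih =>
    match i with
    | 0 => simp [depthFun]
    | 1 => simp [depthFun]
    | n + 2 =>
      rw [depthFun]
      have := ih (min (u n) (n + 1)) (by omega)
      omega

lemma depthFun_congr {u v : ℕ → ℕ} {i : ℕ} (h : ∀ k, k + 2 ≤ i → u k = v k) :
    depthFun u i = depthFun v i := by
  induction i using Nat.strong_induction_on with
  | _ i ih =>
    match i with
    | 0 => simp [hoppeDepth, depthFun]
    | 1 => simp [hoppeDepth, depthFun]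
    | n + 2 =>
      rw [depthFun, depthFun, h n le_rfl,
        ih (min (v n) (n + 1)) (by omega) (fun k hk => h k (by omega))]


variable {Ω : Type*} [MeasurableSpace Ω] {θ : ℝ} {μ : Measure Ω} {U : ℕ → Ω → ℕ}

/-- `g` depends only on `U 0, …, U (n-1)`. -/
def Rep (U : ℕ → Ω → ℕ) (n : ℕ) (g : Ω → ℝ) : Prop :=
  ∃ G : (↥(Finset.range n) → ℕ) → ℝ, ∀ ω, g ω = G (fun i => U (i : ℕ) ω)

lemma Rep.const (U : ℕ → Ω → ℕ) (n : ℕ) (c : ℝ) : Rep U n (fun _ => c) :=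
  ⟨fun _ => c, fun _ => rfl⟩

lemma Rep.add {n : ℕ} {g h : Ω → ℝ} (hg : Rep U n g) (hh : Rep U n h) :
    Rep U n (fun ω => g ω + h ω) := by
  obtain ⟨G, hG⟩ := hg; obtain ⟨H, hH⟩ := hh
  exact ⟨fun v => G v + H v, fun ω => by simp [hG ω, hH ω]⟩

lemma Rep.mul {n : ℕ} {g h : Ω → ℝ} (hg : Rep U n g) (hh : Rep U n h) :
    Rep U n (fun ω => g ω * h ω) := by
  obtain ⟨G, hG⟩ := hg; obtain ⟨H, hH⟩ := hh
  exact ⟨fun v => G v * H v, fun ω => by simp [hG ω, hH ω]⟩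

lemma Rep.sum {n : ℕ} {ι : Type*} (s : Finset ι) {g : ι → Ω → ℝ}
    (hg : ∀ i ∈ s, Rep U n (g i)) : Rep U n (fun ω => ∑ i ∈ s, g i ω) := by
  classical
  induction s using Finset.induction_on with
  | empty => simpa using Rep.const U n 0
  | insert a s hx ih =>
    simp only [Finset.sum_insert hx]
    exact Rep.add (hg a (Finset.mem_insert_self a s))
      (ih (fun i hi => hg i (Finset.mem_insert_of_mem hi)))

lemma Rep.measurable (hm : ∀ k, Measurable (U k)) {n : ℕ} {g : Ω → ℝ}
    (hg : Rep U n g) : Measurable g := by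
  obtain ⟨G, hG⟩ := hg
  have h1 : Measurable (fun ω => (fun i : ↥(Finset.range n) => U (i : ℕ) ω)) :=
    measurable_pi_lambda _ (fun i => hm i)
  have h2 : Measurable G := measurable_of_countable G
  have : g = G ∘ (fun ω => (fun i : ↥(Finset.range n) => U (i : ℕ) ω)) := by
    funext ω; exact hG ω
  rw [this]; exact h2.comp h1

/-- depth of node `j ≤ n+1` depends only on `U 0, …, U (n-1)`. -/
lemma rep_depth (U : ℕ → Ω → ℕ) {n j : ℕ} (hj : j ≤ n + 1) :
    Rep U n (fun ω => (hoppeDepth U ω j : ℝ)) := by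
  classical
  refine ⟨fun v => (depthFun (fun k => if h : k ∈ Finset.range n then v ⟨k, h⟩ else 0) j : ℝ),
    fun ω => ?_⟩
  simp only []
  rw [hoppeDepth_eq_depthFun]
  norm_cast
  refine depthFun_congr (fun k hk => ?_)
  have hkn : k ∈ Finset.range n := Finset.mem_range.2 (by omega)
  simp [hkn]

/-- functions of `U 0, …, U (n-1)` are independent of `U n`. -/
lemma Rep.indepFun (hU : IsHoppeParents θ μ U) {n : ℕ} {g : Ω → ℝ} (hg : Rep U n g)
    (ψ : ℕ → ℝ) : IndepFun g (fun ω => ψ (U n ω)) μ := by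
  classical
  obtain ⟨G, hG⟩ := hg
  have hdisj : Disjoint (Finset.range n) ({n} : Finset ℕ) := by
    simp [Finset.disjoint_singleton_right]
  have h := (hU.indep.indepFun_finset (Finset.range n) {n} hdisj hU.meas).comp
    (φ := G) (ψ := fun v : ↥({n} : Finset ℕ) → ℕ =>
      ψ (v ⟨n, Finset.mem_singleton_self n⟩))
    (measurable_of_countable _) (measurable_of_countable _)
  have : g = G ∘ (fun ω => (fun i : ↥(Finset.range n) => U (i : ℕ) ω)) := by
    funext ω; exact hG ω
  rw [this]
  exact h


lemma integrable_of_abs_le [IsProbabilityMeasure μ] {g : Ω → ℝ} (hmeas : Measurable g)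
    {C : ℝ} (h : ∀ ω, |g ω| ≤ C) : Integrable g μ :=
  (integrable_const C).mono' hmeas.aestronglyMeasurable
    (Filter.Eventually.of_forall (fun ω => by simpa using h ω))

lemma ae_good (hU : IsHoppeParents θ μ U) [IsProbabilityMeasure μ] (n : ℕ) :
    ∀ᵐ ω ∂μ, 1 ≤ U n ω ∧ U n ω ≤ n + 1 := by
  have hms : MeasurableSet {ω | 1 ≤ U n ω ∧ U n ω ≤ n + 1} := by
    have := hU.meas n
    exact (measurableSet_le (measurable_const) this).inter
      (measurableSet_le this measurable_const)
  rw [ae_iff]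
  have h1 := hU.range n
  have : μ {ω | 1 ≤ U n ω ∧ U n ω ≤ n + 1}ᶜ = 0 := by
    rw [measure_compl hms (measure_ne_top μ _), h1, measure_univ, tsub_self]
  simpa [Set.compl_setOf] using this

lemma measure_min_eq (hU : IsHoppeParents θ μ U) [IsProbabilityMeasure μ] (n j : ℕ) :
    μ {ω | min (U n ω) (n + 1) = j} = μ {ω | U n ω = j} := by
  refine measure_congr ?_
  filter_upwards [ae_good hU n] with ω hω
  show (min (U n ω) (n + 1) = j) = (U n ω = j)
  simp only [eq_iff_iff]
  omega

lemma measure_un_zero (hU : IsHoppeParents θ μ U) [IsProbabilityMeasure μ] (n : ℕ) :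
    μ {ω | U n ω = 0} = 0 := by
  have := ae_good hU n
  rw [ae_iff] at this
  refine measure_mono_null ?_ this
  intro ω hω
  simp only [Set.mem_setOf_eq] at hω ⊢
  omega

lemma toReal_root (hU : IsHoppeParents θ μ U) (hθ : 0 < θ) (n : ℕ) :
    (μ {ω | U n ω = 1}).toReal = θ / (θ + n) := by
  rw [hU.root n, ENNReal.toReal_ofReal]
  positivity

lemma toReal_nonroot (hU : IsHoppeParents θ μ U) (hθ : 0 < θ) {n j : ℕ}
    (h2 : 2 ≤ j) (hj : j ≤ n + 1) :
    (μ {ω | U n ω = j}).toReal = 1 / (θ + n) := by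
  rw [hU.nonroot n j h2 hj, ENNReal.toReal_ofReal]
  positivity

/-- The key partitioning identity. -/
lemma partition_lemma (hU : IsHoppeParents θ μ U) (hθ : 0 < θ) [IsProbabilityMeasure μ]
    (n : ℕ) (g : ℕ → Ω → ℝ)
    (hrep : ∀ j, j ≤ n + 1 → Rep U n (g j))
    (hbd : ∀ j, j ≤ n + 1 → ∃ C, ∀ ω, |g j ω| ≤ C) :
    ∫ ω, g (min (U n ω) (n + 1)) ω ∂μ
      = (θ / (θ + n)) * ∫ ω, g 1 ω ∂μ
        + (1 / (θ + n)) * ∑ j ∈ Finset.Icc 2 (n + 1), ∫ ω, g j ω ∂μ := by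
  classical
  have hmeasg : ∀ j, j ≤ n + 1 → Measurable (g j) :=
    fun j hj => (hrep j hj).measurable hU.meas
  -- the indicator-type factor
  set χ : ℕ → Ω → ℝ := fun j ω => if min (U n ω) (n + 1) = j then (1 : ℝ) else 0 with hχ
  have hχmeas : ∀ j, Measurable (χ j) := by
    intro j
    have : χ j = (fun u : ℕ => if min u (n + 1) = j then (1 : ℝ) else 0) ∘ U n := rfl
    rw [this]
    exact (measurable_from_nat).comp (hU.meas n)
  have hχint : ∀ j, Integrable (χ j) μ := by
    intro j
    refine integrable_of_abs_le (hχmeas j) (C := 1) (fun ω => ?_)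
    simp only [hχ]
    split <;> simp
  have hgint : ∀ j, j ≤ n + 1 → Integrable (g j) μ := by
    intro j hj
    obtain ⟨C, hC⟩ := hbd j hj
    exact integrable_of_abs_le (hmeasg j hj) hC
  -- pointwise decomposition
  have hpt : ∀ ω, g (min (U n ω) (n + 1)) ω
      = ∑ j ∈ Finset.range (n + 2), g j ω * χ j ω := by
    intro ω
    have hmem : min (U n ω) (n + 1) ∈ Finset.range (n + 2) := by
      simp only [Finset.mem_range]; omega
    rw [Finset.sum_eq_single (min (U n ω) (n + 1))]
    · simp [hχ]
    · intro b _ hb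
      simp [hχ, Ne.symm hb]
    · intro h; exact absurd hmem h
  -- integrate term by term
  have hint : ∫ ω, g (min (U n ω) (n + 1)) ω ∂μ
      = ∑ j ∈ Finset.range (n + 2),
          (∫ ω, g j ω ∂μ) * (μ {ω | U n ω = j}).toReal := by
    rw [integral_congr_ae (Filter.Eventually.of_forall hpt)]
    rw [integral_finset_sum]
    · refine Finset.sum_congr rfl (fun j hj => ?_)
      have hj' : j ≤ n + 1 := by simpa [Nat.lt_succ_iff] using Finset.mem_range.1 hj
      have hindep : IndepFun (g j) (χ j) μ := by
        have := (hrep j hj').indepFun hU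
          (ψ := fun u => if min u (n + 1) = j then (1 : ℝ) else 0)
        exact this
      have hmul := IndepFun.integral_mul_eq_mul_integral hindep (hgint j hj').aestronglyMeasurable (hχint j).aestronglyMeasurable
      rw [show ∫ (a : Ω), g j a * χ j a ∂μ = integral μ (g j * χ j) from rfl, hmul]
      congr 1
      -- ∫ χ j = measure
      have : χ j = Set.indicator {ω | min (U n ω) (n + 1) = j} (fun _ => (1 : ℝ)) := by
        funext ω
        simp only [hχ, Set.indicator_apply, Set.mem_setOf_eq]
      rw [this, integral_indicator_const (1 : ℝ), smul_eq_mul, mul_one, Measure.real, measure_min_eq hU]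
      exact ((measurable_from_nat (f := fun u => min u (n + 1))).comp (hU.meas n))
        (measurableSet_singleton j)
    · intro j hj
      have hj' : j ≤ n + 1 := by simpa [Nat.lt_succ_iff] using Finset.mem_range.1 hj
      obtain ⟨C, hC⟩ := hbd j hj'
      refine integrable_of_abs_le ((hmeasg j hj').mul (hχmeas j)) (C := |C|) (fun ω => ?_)
      have h1 : |χ j ω| ≤ 1 := by simp only [hχ]; split <;> simp
      calc |g j ω * χ j ω| = |g j ω| * |χ j ω| := abs_mul _ _
        _ ≤ |C| * 1 := mul_le_mul (le_trans (hC ω) (le_abs_self C)) h1 (abs_nonneg _) (abs_nonneg _)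
        _ = |C| := mul_one _
  have hsplit : Finset.range (n + 2) = insert 0 (insert 1 (Finset.Icc 2 (n + 1))) := by
    ext x
    simp only [Finset.mem_range, Finset.mem_insert, Finset.mem_Icc]
    omega
  rw [hint, hsplit, Finset.sum_insert (by simp), Finset.sum_insert (by simp),
    measure_un_zero hU, toReal_root hU hθ]
  simp only [ENNReal.toReal_zero, mul_zero, zero_add]
  rw [Finset.mul_sum]
  congr 1
  · ring
  · refine Finset.sum_congr rfl fun j hj => ?_
    obtain ⟨h2, hj'⟩ := Finset.mem_Icc.1 hj
    rw [toReal_nonroot hU hθ h2 hj']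
    ring

lemma Rep.congr {n : ℕ} {g g' : Ω → ℝ} (hg : Rep U n g) (h : ∀ ω, g ω = g' ω) :
    Rep U n g' := by
  obtain ⟨G, hG⟩ := hg
  exact ⟨G, fun ω => (h ω) ▸ hG ω⟩

section Moments

variable (μ U)

def eD (j : ℕ) : ℝ := ∫ ω, (hoppeDepth U ω j : ℝ) ∂μ
def eD2 (j : ℕ) : ℝ := ∫ ω, ((hoppeDepth U ω j : ℝ)) ^ 2 ∂μ
def eI (m : ℕ) : ℝ := ∫ ω, (hoppePathLength U ω m : ℝ) ∂μ
def eI2 (m : ℕ) : ℝ := ∫ ω, ((hoppePathLength U ω m : ℝ)) ^ 2 ∂μ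
def sD2 (m : ℕ) : ℝ := ∑ j ∈ Finset.Icc 1 m, eD2 μ U j

end Moments

lemma depth_le (U : ℕ → Ω → ℕ) (ω : Ω) (i : ℕ) : hoppeDepth U ω i ≤ i := by
  rw [hoppeDepth_eq_depthFun]; exact depthFun_le _ _

lemma depth_one (U : ℕ → Ω → ℕ) (ω : Ω) : hoppeDepth U ω 1 = 0 := by
  simp [hoppeDepth]

lemma pathLength_cast (U : ℕ → Ω → ℕ) (ω : Ω) (m : ℕ) :
    (hoppePathLength U ω m : ℝ) = ∑ j ∈ Finset.Icc 1 m, (hoppeDepth U ω j : ℝ) := by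
  rw [hoppePathLength]; push_cast; rfl

lemma abs_depth_le (U : ℕ → Ω → ℕ) (ω : Ω) (i : ℕ) : |(hoppeDepth U ω i : ℝ)| ≤ i := by
  rw [abs_of_nonneg (by positivity)]
  exact_mod_cast depth_le U ω i

lemma abs_pathLength_le (U : ℕ → Ω → ℕ) (ω : Ω) (m : ℕ) :
    |(hoppePathLength U ω m : ℝ)| ≤ (m : ℝ) * m := by
  rw [abs_of_nonneg (by positivity), pathLength_cast]
  calc ∑ j ∈ Finset.Icc 1 m, (hoppeDepth U ω j : ℝ)
      ≤ ∑ j ∈ Finset.Icc 1 m, (m : ℝ) := by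
        refine Finset.sum_le_sum (fun j hj => ?_)
        have h1 := depth_le U ω j
        have h2 := (Finset.mem_Icc.1 hj).2
        exact_mod_cast le_trans h1 (by exact_mod_cast h2)
    _ ≤ (m : ℝ) * m := by
        rw [Finset.sum_const, Nat.card_Icc, Nat.add_sub_cancel, nsmul_eq_mul]

variable [IsProbabilityMeasure μ]

lemma measD (hU : IsHoppeParents θ μ U) (j : ℕ) :
    Measurable (fun ω => (hoppeDepth U ω j : ℝ)) :=
  (rep_depth U (n := j) (by omega)).measurable hU.meas

lemma measI (hU : IsHoppeParents θ μ U) (m : ℕ) :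
    Measurable (fun ω => (hoppePathLength U ω m : ℝ)) := by
  have : (fun ω => (hoppePathLength U ω m : ℝ))
      = fun ω => ∑ j ∈ Finset.Icc 1 m, (hoppeDepth U ω j : ℝ) := by
    funext ω; exact pathLength_cast U ω m
  rw [this]
  exact Finset.measurable_sum _ (fun j _ => measD hU j)

lemma intD (hU : IsHoppeParents θ μ U) (j : ℕ) :
    Integrable (fun ω => (hoppeDepth U ω j : ℝ)) μ :=
  integrable_of_abs_le (measD hU j) (fun ω => abs_depth_le U ω j)

lemma intI (hU : IsHoppeParents θ μ U) (m : ℕ) :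
    Integrable (fun ω => (hoppePathLength U ω m : ℝ)) μ :=
  integrable_of_abs_le (measI hU m) (fun ω => abs_pathLength_le U ω m)

lemma rep_I (hU : IsHoppeParents θ μ U) {n m : ℕ} (hm : m ≤ n + 1) :
    Rep U n (fun ω => (hoppePathLength U ω m : ℝ)) := by
  refine Rep.congr (Rep.sum (Finset.Icc 1 m)
    (g := fun j ω => (hoppeDepth U ω j : ℝ)) (fun j hj => ?_)) (fun ω => ?_)
  · exact rep_depth U (le_trans (Finset.mem_Icc.1 hj).2 hm)
  · exact (pathLength_cast U ω m).symm

lemma eD_one (hU : IsHoppeParents θ μ U) : eD μ U 1 = 0 := by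
  rw [eD]; simp [depth_one]

lemma eD2_one (hU : IsHoppeParents θ μ U) : eD2 μ U 1 = 0 := by
  rw [eD2]; simp [depth_one]

lemma eI_eq_sum (hU : IsHoppeParents θ μ U) (m : ℕ) :
    eI μ U m = ∑ j ∈ Finset.Icc 1 m, eD μ U j := by
  rw [eI]
  rw [integral_congr_ae (Filter.Eventually.of_forall (fun ω => pathLength_cast U ω m))]
  exact integral_finset_sum _ (fun j _ => intD hU j)

lemma intD2 (hU : IsHoppeParents θ μ U) (j : ℕ) :
    Integrable (fun ω => ((hoppeDepth U ω j : ℝ)) ^ 2) μ := by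
  refine integrable_of_abs_le ((measD hU j).pow_const 2) (C := (j : ℝ) ^ 2) (fun ω => ?_)
  rw [abs_pow]
  exact pow_le_pow_left₀ (abs_nonneg _) (abs_depth_le U ω j) 2

lemma intI2 (hU : IsHoppeParents θ μ U) (m : ℕ) :
    Integrable (fun ω => ((hoppePathLength U ω m : ℝ)) ^ 2) μ := by
  refine integrable_of_abs_le ((measI hU m).pow_const 2) (C := ((m:ℝ) * m) ^ 2) (fun ω => ?_)
  rw [abs_pow]
  exact pow_le_pow_left₀ (abs_nonneg _) (abs_pathLength_le U ω m) 2

lemma intID (hU : IsHoppeParents θ μ U) (m j : ℕ) :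
    Integrable (fun ω => (hoppePathLength U ω m : ℝ) * (hoppeDepth U ω j : ℝ)) μ := by
  refine integrable_of_abs_le ((measI hU m).mul (measD hU j)) (C := ((m:ℝ) * m) * j)
    (fun ω => ?_)
  rw [abs_mul]
  exact mul_le_mul (abs_pathLength_le U ω m) (abs_depth_le U ω j) (abs_nonneg _)
    (by positivity)

lemma sum_Icc_two_eq (f : ℕ → ℝ) (n : ℕ) (h1 : f 1 = 0) :
    ∑ j ∈ Finset.Icc 2 (n + 1), f j = ∑ j ∈ Finset.Icc 1 (n + 1), f j := by
  have h : Finset.Icc 1 (n + 1) = insert 1 (Finset.Icc 2 (n + 1)) := by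
    ext x; simp only [Finset.mem_Icc, Finset.mem_insert]; omega
  rw [h, Finset.sum_insert (by simp [Finset.mem_Icc]), h1, zero_add]

lemma depth_succ_cast (U : ℕ → Ω → ℕ) (ω : Ω) (n : ℕ) :
    (hoppeDepth U ω (n + 2) : ℝ) = 1 + (hoppeDepth U ω (min (U n ω) (n + 1)) : ℝ) := by
  rw [hoppeDepth]; push_cast; ring

lemma eD_rec (hU : IsHoppeParents θ μ U) (hθ : 0 < θ) (n : ℕ) :
    eD μ U (n + 2) = 1 + eI μ U (n + 1) / (θ + n) := by
  have h0 : (θ + (n : ℝ)) ≠ 0 := by positivity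
  set g : ℕ → Ω → ℝ := fun j ω => 1 + (hoppeDepth U ω j : ℝ) with hg
  have hpl := partition_lemma hU hθ n g
    (fun j hj => Rep.add (Rep.const U n 1) (rep_depth U hj))
    (fun j hj => ⟨1 + j, fun ω => by
      simp only [hg]
      calc |1 + (hoppeDepth U ω j : ℝ)| ≤ |1| + |(hoppeDepth U ω j : ℝ)| := abs_add_le _ _
        _ ≤ 1 + j := by rw [abs_one]; linarith [abs_depth_le U ω j]⟩)
  have hgint : ∀ j, ∫ ω, g j ω ∂μ = 1 + eD μ U j := by
    intro j
    rw [hg]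
    rw [integral_add (integrable_const 1) (intD hU j)]
    simp [eD]
  rw [eD, integral_congr_ae (Filter.Eventually.of_forall (fun ω => depth_succ_cast U ω n)),
    show (fun ω => 1 + (hoppeDepth U ω (min (U n ω) (n+1)) : ℝ))
      = fun ω => g (min (U n ω) (n + 1)) ω from rfl] at *
  rw [hpl, hgint 1, eD_one hU]
  have hsum : ∑ j ∈ Finset.Icc 2 (n + 1), ∫ ω, g j ω ∂μ = n + eI μ U (n + 1) := by
    rw [Finset.sum_congr rfl (fun j _ => hgint j), Finset.sum_add_distrib,
      Finset.sum_const, Nat.card_Icc, show n + 1 + 1 - 2 = n from by omega,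
      sum_Icc_two_eq _ n (eD_one hU), ← eI_eq_sum hU]
    simp [nsmul_eq_mul]
  rw [hsum]
  field_simp
  ring

lemma eD2_rec (hU : IsHoppeParents θ μ U) (hθ : 0 < θ) (n : ℕ) :
    eD2 μ U (n + 2) = 1 + (2 * eI μ U (n + 1) + sD2 μ U (n + 1)) / (θ + n) := by
  have h0 : (θ + (n : ℝ)) ≠ 0 := by positivity
  set g : ℕ → Ω → ℝ := fun j ω => (1 + (hoppeDepth U ω j : ℝ)) ^ 2 with hg
  have habs : ∀ j ω, |1 + (hoppeDepth U ω j : ℝ)| ≤ 1 + j := by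
    intro j ω
    calc |1 + (hoppeDepth U ω j : ℝ)| ≤ |1| + |(hoppeDepth U ω j : ℝ)| := abs_add_le _ _
      _ ≤ 1 + j := by rw [abs_one]; linarith [abs_depth_le U ω j]
  have hpl := partition_lemma hU hθ n g
    (fun j hj => Rep.congr
      (Rep.mul (Rep.add (Rep.const U n 1) (rep_depth U hj))
        (Rep.add (Rep.const U n 1) (rep_depth U hj)))
      (fun ω => by simp only [hg]; ring))
    (fun j hj => ⟨(1 + j) ^ 2, fun ω => by
      rw [hg, abs_pow]
      exact pow_le_pow_left₀ (abs_nonneg _) (habs j ω) 2⟩)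
  have hgint : ∀ j, ∫ ω, g j ω ∂μ = 1 + 2 * eD μ U j + eD2 μ U j := by
    intro j
    have hpt : ∀ ω, g j ω
        = (1 + 2 * (hoppeDepth U ω j : ℝ)) + ((hoppeDepth U ω j : ℝ)) ^ 2 := by
      intro ω; rw [hg]; ring
    rw [integral_congr_ae (Filter.Eventually.of_forall hpt),
      integral_add (by exact (integrable_const 1).add ((intD hU j).const_mul 2)) (intD2 hU j),
      integral_add (integrable_const 1) ((intD hU j).const_mul 2)]
    simp only [integral_const, measure_univ, probReal_univ, ENNReal.toReal_one, smul_eq_mul, one_mul,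
      integral_const_mul, eD, eD2]
    try ring
  have hpt2 : ∀ ω, ((hoppeDepth U ω (n + 2) : ℝ)) ^ 2 = g (min (U n ω) (n + 1)) ω := by
    intro ω; rw [hg, depth_succ_cast U ω n]
  rw [eD2, integral_congr_ae (Filter.Eventually.of_forall hpt2), hpl, hgint 1, eD_one hU,
    eD2_one hU]
  have hsum : ∑ j ∈ Finset.Icc 2 (n + 1), ∫ ω, g j ω ∂μ
      = n + 2 * eI μ U (n + 1) + sD2 μ U (n + 1) := by
    rw [Finset.sum_congr rfl (fun j _ => hgint j)]
    rw [Finset.sum_add_distrib, Finset.sum_add_distrib, Finset.sum_const, Nat.card_Icc,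
      show n + 1 + 1 - 2 = n from by omega,
      sum_Icc_two_eq (fun j => 2 * eD μ U j) n (by show 2 * eD μ U 1 = 0; rw [eD_one hU]; ring),
      sum_Icc_two_eq (fun j => eD2 μ U j) n (eD2_one hU), ← Finset.mul_sum, ← eI_eq_sum hU]
    simp only [nsmul_eq_mul, mul_one, sD2]
  rw [hsum]
  field_simp
  ring

lemma cross_rec (hU : IsHoppeParents θ μ U) (hθ : 0 < θ) (n : ℕ) :
    ∫ ω, (hoppePathLength U ω (n + 1) : ℝ) * (hoppeDepth U ω (n + 2) : ℝ) ∂μ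
      = eI μ U (n + 1) + eI2 μ U (n + 1) / (θ + n) := by
  have h0 : (θ + (n : ℝ)) ≠ 0 := by positivity
  set g : ℕ → Ω → ℝ :=
    fun j ω => (hoppePathLength U ω (n + 1) : ℝ) * (1 + (hoppeDepth U ω j : ℝ)) with hg
  have hpl := partition_lemma hU hθ n g
    (fun j hj => Rep.mul (rep_I hU le_rfl)
      (Rep.add (Rep.const U n 1) (rep_depth U hj)))
    (fun j hj => ⟨((n+1:ℝ) * (n+1)) * (1 + j), fun ω => by
      rw [hg, abs_mul]
      refine mul_le_mul ?_ ?_ (abs_nonneg _) (by positivity)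
      · exact_mod_cast abs_pathLength_le U ω (n + 1)
      · calc |1 + (hoppeDepth U ω j : ℝ)| ≤ |1| + |(hoppeDepth U ω j : ℝ)| := abs_add_le _ _
          _ ≤ 1 + j := by rw [abs_one]; linarith [abs_depth_le U ω j]⟩)
  have hgint : ∀ j, ∫ ω, g j ω ∂μ
      = eI μ U (n + 1) + ∫ ω, (hoppePathLength U ω (n + 1) : ℝ) * (hoppeDepth U ω j : ℝ) ∂μ := by
    intro j
    have hpt : ∀ ω, g j ω = (hoppePathLength U ω (n + 1) : ℝ)
        + (hoppePathLength U ω (n + 1) : ℝ) * (hoppeDepth U ω j : ℝ) := by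
      intro ω; rw [hg]; ring
    rw [integral_congr_ae (Filter.Eventually.of_forall hpt),
      integral_add (intI hU (n + 1)) (intID hU (n + 1) j), eI]
  have hpt2 : ∀ ω, (hoppePathLength U ω (n + 1) : ℝ) * (hoppeDepth U ω (n + 2) : ℝ)
      = g (min (U n ω) (n + 1)) ω := by
    intro ω; rw [hg, depth_succ_cast U ω n]
  rw [integral_congr_ae (Filter.Eventually.of_forall hpt2), hpl, hgint 1]
  have hd1 : ∫ ω, (hoppePathLength U ω (n + 1) : ℝ) * (hoppeDepth U ω 1 : ℝ) ∂μ = 0 := by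
    simp [depth_one]
  have hsum : ∑ j ∈ Finset.Icc 2 (n + 1), ∫ ω, g j ω ∂μ
      = n * eI μ U (n + 1) + eI2 μ U (n + 1) := by
    rw [Finset.sum_congr rfl (fun j _ => hgint j), Finset.sum_add_distrib, Finset.sum_const,
      Nat.card_Icc, show n + 1 + 1 - 2 = n from by omega,
      sum_Icc_two_eq _ n hd1]
    have hswap : ∑ j ∈ Finset.Icc 1 (n + 1),
        ∫ ω, (hoppePathLength U ω (n + 1) : ℝ) * (hoppeDepth U ω j : ℝ) ∂μ
        = eI2 μ U (n + 1) := by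
      rw [← integral_finset_sum _ (fun j _ => intID hU (n + 1) j), eI2]
      refine integral_congr_ae (Filter.Eventually.of_forall (fun ω => ?_))
      show ∑ j ∈ Finset.Icc 1 (n + 1),
          (hoppePathLength U ω (n + 1) : ℝ) * (hoppeDepth U ω j : ℝ)
        = ((hoppePathLength U ω (n + 1) : ℝ)) ^ 2
      rw [← Finset.mul_sum, ← pathLength_cast, pow_two]
    rw [hswap]
    simp only [nsmul_eq_mul, mul_one]
  rw [hd1, hsum]
  field_simp
  ring

lemma eI_step (hU : IsHoppeParents θ μ U) (n : ℕ) :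
    eI μ U (n + 2) = eI μ U (n + 1) + eD μ U (n + 2) := by
  rw [eI_eq_sum hU, eI_eq_sum hU, Finset.sum_Icc_succ_top (by omega)]

lemma sD2_step (n : ℕ) : sD2 μ U (n + 2) = sD2 μ U (n + 1) + eD2 μ U (n + 2) := by
  rw [sD2, sD2, Finset.sum_Icc_succ_top (by omega)]

lemma pathLength_step (U : ℕ → Ω → ℕ) (ω : Ω) (n : ℕ) :
    (hoppePathLength U ω (n + 2) : ℝ)
      = (hoppePathLength U ω (n + 1) : ℝ) + (hoppeDepth U ω (n + 2) : ℝ) := by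
  rw [pathLength_cast, pathLength_cast, Finset.sum_Icc_succ_top (by omega : 1 ≤ n + 2)]

lemma eI2_step (hU : IsHoppeParents θ μ U) (n : ℕ) :
    eI2 μ U (n + 2) = eI2 μ U (n + 1)
      + 2 * ∫ ω, (hoppePathLength U ω (n + 1) : ℝ) * (hoppeDepth U ω (n + 2) : ℝ) ∂μ
      + eD2 μ U (n + 2) := by
  have hpt : ∀ ω, ((hoppePathLength U ω (n + 2) : ℝ)) ^ 2
      = (((hoppePathLength U ω (n + 1) : ℝ)) ^ 2
          + 2 * ((hoppePathLength U ω (n + 1) : ℝ) * (hoppeDepth U ω (n + 2) : ℝ)))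
        + ((hoppeDepth U ω (n + 2) : ℝ)) ^ 2 := by
    intro ω; rw [pathLength_step U ω n]; ring
  rw [eI2, integral_congr_ae (Filter.Eventually.of_forall hpt),
    integral_add (by exact (intI2 hU (n + 1)).add ((intID hU (n + 1) (n + 2)).const_mul 2))
      (intD2 hU (n + 2)),
    integral_add (intI2 hU (n + 1)) ((intID hU (n + 1) (n + 2)).const_mul 2),
    integral_const_mul, eI2, eD2]

lemma eI_one (hU : IsHoppeParents θ μ U) : eI μ U 1 = 0 := by
  rw [eI_eq_sum hU]
  simp [eD_one hU]

lemma sD2_one (hU : IsHoppeParents θ μ U) : sD2 μ U 1 = 0 := by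
  rw [sD2]
  simp [eD2_one hU]

lemma eI2_one (hU : IsHoppeParents θ μ U) : eI2 μ U 1 = 0 := by
  have hpt : ∀ ω, ((hoppePathLength U ω 1 : ℝ)) ^ 2 = 0 := by
    intro ω
    rw [pathLength_cast]
    simp [depth_one]
  rw [eI2, integral_congr_ae (Filter.Eventually.of_forall hpt)]
  simp

section ClosedForms

variable (θ : ℝ)

def Hs (n : ℕ) : ℝ := ∑ i ∈ Finset.range n, 1 / (θ + i + 1)
def Ts (n : ℕ) : ℝ := ∑ i ∈ Finset.range n, (1 / (θ + i + 1) - 1 / (θ + i + 1) ^ 2)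
def Ks (n : ℕ) : ℝ := ∑ i ∈ Finset.range n, (2 * Hs θ i + 1) / (θ + i + 1)
def Ss (n : ℕ) : ℝ := ∑ i ∈ Finset.range n, Ts θ i / ((θ + i + 1) * (θ + i + 2))
def Qs (n : ℕ) : ℝ := ∑ i ∈ Finset.range n, (1 / (θ + i + 1) - 1 / (θ + i + 1) ^ 2) / (θ + i + 2)

lemma Hs_succ (n : ℕ) : Hs θ (n + 1) = Hs θ n + 1 / (θ + n + 1) := Finset.sum_range_succ _ n
lemma Ts_succ (n : ℕ) : Ts θ (n + 1) = Ts θ n + (1 / (θ + n + 1) - 1 / (θ + n + 1) ^ 2) :=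
  Finset.sum_range_succ _ n
lemma Ks_succ (n : ℕ) : Ks θ (n + 1) = Ks θ n + (2 * Hs θ n + 1) / (θ + n + 1) :=
  Finset.sum_range_succ _ n
lemma Ss_succ (n : ℕ) : Ss θ (n + 1) = Ss θ n + Ts θ n / ((θ + n + 1) * (θ + n + 2)) :=
  Finset.sum_range_succ _ n
lemma Qs_succ (n : ℕ) :
    Qs θ (n + 1) = Qs θ n + (1 / (θ + n + 1) - 1 / (θ + n + 1) ^ 2) / (θ + n + 2) :=
  Finset.sum_range_succ _ n

variable {θ}

lemma Ks_eq (hθ : 0 < θ) (n : ℕ) : Ks θ n = (Hs θ n) ^ 2 + Ts θ n := by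
  induction n with
  | zero => simp [Ks, Hs, Ts]
  | succ n ih =>
    have h1 : θ + (n : ℝ) + 1 ≠ 0 := by positivity
    rw [Ks_succ, Ts_succ, Hs_succ, ih]
    field_simp
    ring

lemma Ss_eq (hθ : 0 < θ) (n : ℕ) : Ss θ n = Qs θ n - Ts θ n / (θ + n + 1) := by
  induction n with
  | zero => simp [Ss, Qs, Ts]
  | succ n ih =>
    have h1 : θ + (n : ℝ) + 1 ≠ 0 := by positivity
    have h2 : θ + (n : ℝ) + 2 ≠ 0 := by positivity
    rw [Ss_succ, Ts_succ, Qs_succ, ih]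
    push_cast
    field_simp
    ring

lemma Qs_eq (hθ : 0 < θ) (n : ℕ) :
    Qs θ n = 2 / (θ + 1) - 2 / (θ + n + 1) - ∑ i ∈ Finset.range n, (1 / (θ + i + 1)) ^ 2 := by
  induction n with
  | zero => simp [Qs]
  | succ n ih =>
    have h1 : θ + (n : ℝ) + 1 ≠ 0 := by positivity
    have h2 : θ + (n : ℝ) + 2 ≠ 0 := by positivity
    rw [Qs_succ, ih, Finset.sum_range_succ]
    push_cast
    field_simp
    ring

end ClosedForms

lemma eI_closed (hU : IsHoppeParents θ μ U) (hθ : 0 < θ) (n : ℕ) :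
    eI μ U (n + 1) = (θ + n) * Hs θ n := by
  induction n with
  | zero => simp [eI_one hU, Hs]
  | succ n ih =>
    have h1 : θ + (n : ℝ) ≠ 0 := by positivity
    have h2 : θ + (n : ℝ) + 1 ≠ 0 := by positivity
    rw [eI_step hU, eD_rec hU hθ, ih, Hs_succ]
    push_cast
    field_simp
    ring

lemma sD2_closed (hU : IsHoppeParents θ μ U) (hθ : 0 < θ) (n : ℕ) :
    sD2 μ U (n + 1) = (θ + n) * Ks θ n := by
  induction n with
  | zero => simp [sD2_one hU, Ks]
  | succ n ih =>
    have h1 : θ + (n : ℝ) ≠ 0 := by positivity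
    have h2 : θ + (n : ℝ) + 1 ≠ 0 := by positivity
    rw [sD2_step, eD2_rec hU hθ, ih, Ks_succ, eI_closed hU hθ]
    push_cast
    field_simp
    ring

lemma eI2_closed (hU : IsHoppeParents θ μ U) (hθ : 0 < θ) (n : ℕ) :
    eI2 μ U (n + 1) = ((θ + n) * Hs θ n) ^ 2 + (θ + n) * (θ + n + 1) * Ss θ n := by
  induction n with
  | zero => simp [eI2_one hU, Hs, Ss]
  | succ n ih =>
    have h1 : θ + (n : ℝ) ≠ 0 := by positivity
    have h2 : θ + (n : ℝ) + 1 ≠ 0 := by positivity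
    have h3 : θ + (n : ℝ) + 2 ≠ 0 := by positivity
    rw [eI2_step hU, cross_rec hU hθ, eD2_rec hU hθ, ih, sD2_closed hU hθ,
      eI_closed hU hθ, Ks_eq hθ, Hs_succ, Ss_succ]
    push_cast
    field_simp
    ring

lemma variance_closed (hU : IsHoppeParents θ μ U) (hθ : 0 < θ) (n : ℕ) :
    variance (fun ω => (hoppePathLength U ω (n + 1) : ℝ)) μ
      = (θ + n) * (θ + n + 1) * Ss θ n := by
  have hmem : MemLp (fun ω => (hoppePathLength U ω (n + 1) : ℝ)) 2 μ := by
    refine MemLp.of_bound (measI hU (n + 1)).aestronglyMeasurable ((n + 1 : ℝ) * (n + 1))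
      (Filter.Eventually.of_forall (fun ω => ?_))
    simpa using abs_pathLength_le U ω (n + 1)
  rw [variance_eq_sub hmem]
  have e1 : μ[(fun ω => (hoppePathLength U ω (n + 1) : ℝ)) ^ 2] = eI2 μ U (n + 1) := rfl
  have e2 : μ[(fun ω => (hoppePathLength U ω (n + 1) : ℝ))] = eI μ U (n + 1) := rfl
  rw [e1, e2, eI2_closed hU hθ, eI_closed hU hθ]
  ring
section Limits

variable {θ : ℝ}

lemma tendsto_inv_shift (c : ℝ) (hθ : 0 < θ) :
    Tendsto (fun n : ℕ => c / (θ + n + 1)) atTop (𝓝 0) := by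
  have h1 : Tendsto (fun n : ℕ => θ + (n : ℝ) + 1) atTop atTop := by
    apply Filter.tendsto_atTop_add_const_right
    exact Filter.tendsto_atTop_add_const_left _ _ tendsto_natCast_atTop_atTop
  have h2 : Tendsto (fun n : ℕ => (θ + (n : ℝ) + 1)⁻¹) atTop (𝓝 0) :=
    tendsto_inv_atTop_zero.comp h1
  have := h2.const_mul c
  simpa [div_eq_mul_inv, mul_zero] using this

lemma summable_sq (hθ : 0 < θ) : Summable (fun k : ℕ => (1 / (θ + k + 1)) ^ 2) := by
  have hbase : Summable (fun k : ℕ => 1 / ((k : ℝ) + 1) ^ 2) := by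
    have h := (summable_one_div_nat_pow (p := 2)).2 (by norm_num)
    have := (summable_nat_add_iff (f := fun n : ℕ => 1 / (n : ℝ) ^ 2) 1).2 h
    simpa using this
  refine Summable.of_nonneg_of_le (fun k => by positivity) (fun k => ?_) hbase
  rw [div_pow, one_pow]
  apply one_div_le_one_div_of_le
  · positivity
  · have : ((k : ℝ) + 1) ≤ θ + k + 1 := by linarith
    calc ((k : ℝ) + 1) ^ 2 ≤ (θ + k + 1) ^ 2 := by
          apply pow_le_pow_left₀ (by positivity) this
      _ = _ := rfl

lemma Ts_nonneg (hθ : 0 < θ) (n : ℕ) : 0 ≤ Ts θ n := by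
  refine Finset.sum_nonneg (fun i _ => ?_)
  have h1 : (1 : ℝ) ≤ θ + i + 1 := by
    have : (0 : ℝ) ≤ i := Nat.cast_nonneg i
    linarith
  have h0 : (0 : ℝ) < θ + i + 1 := by positivity
  rw [sub_nonneg, pow_two, ← one_div_mul_one_div]
  calc 1 / (θ + i + 1) * (1 / (θ + i + 1)) ≤ 1 * (1 / (θ + i + 1)) := by
        apply mul_le_mul_of_nonneg_right _ (by positivity)
        rw [div_le_one h0]; exact h1
    _ = 1 / (θ + i + 1) := one_mul _

lemma tendsto_Ts_div (hθ : 0 < θ) :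
    Tendsto (fun n : ℕ => Ts θ n / (θ + n + 1)) atTop (𝓝 0) := by
  have hterm : Tendsto (fun i : ℕ => 1 / (θ + i + 1) - 1 / (θ + i + 1) ^ 2) atTop (𝓝 0) := by
    have h1 := tendsto_inv_shift 1 hθ
    have h2 : Tendsto (fun n : ℕ => (1 / (θ + n + 1)) ^ 2) atTop (𝓝 0) := by
      have := h1.mul h1
      simpa [pow_two] using this
    have := h1.sub h2
    simpa [div_pow] using this
  have hces : Tendsto (fun n : ℕ => ((n : ℝ))⁻¹ * Ts θ n) atTop (𝓝 0) := by
    have := hterm.cesaro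
    simpa [Ts] using this
  refine tendsto_of_tendsto_of_tendsto_of_le_of_le' tendsto_const_nhds hces ?_ ?_
  · exact Filter.Eventually.of_forall
      (fun n => div_nonneg (Ts_nonneg hθ n) (by positivity))
  · filter_upwards [Filter.eventually_ge_atTop 1] with n hn
    have hn1 : (1 : ℝ) ≤ (n : ℝ) := by exact_mod_cast hn
    have hpos : (0 : ℝ) < n := by linarith
    rw [div_eq_inv_mul]
    apply mul_le_mul_of_nonneg_right _ (Ts_nonneg hθ n)
    apply inv_anti₀ hpos
    linarith

lemma tendsto_Ss (hθ : 0 < θ) :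
    Tendsto (fun n : ℕ => Ss θ n) atTop
      (𝓝 (2 / (θ + 1) - ∑' k : ℕ, (1 / (θ + (k : ℝ) + 1)) ^ 2)) := by
  have hsum : Tendsto (fun n : ℕ => ∑ i ∈ Finset.range n, (1 / (θ + (i : ℝ) + 1)) ^ 2)
      atTop (𝓝 (∑' k : ℕ, (1 / (θ + (k : ℝ) + 1)) ^ 2)) :=
    (summable_sq hθ).hasSum.tendsto_sum_nat
  have h2 := tendsto_inv_shift 2 hθ
  have hT := tendsto_Ts_div hθ
  have hcomb := ((tendsto_const_nhds (x := 2 / (θ + 1)) (f := atTop)).sub h2).sub hsum |>.sub hT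
  have heq : ∀ n : ℕ, 2 / (θ + 1) - 2 / (θ + n + 1)
      - ∑ i ∈ Finset.range n, (1 / (θ + (i : ℝ) + 1)) ^ 2 - Ts θ n / (θ + n + 1)
      = Ss θ n := by
    intro n
    rw [Ss_eq hθ, Qs_eq hθ]
  rw [show (2 / (θ + 1) - ∑' k : ℕ, (1 / (θ + (k : ℝ) + 1)) ^ 2)
      = 2 / (θ + 1) - 0 - (∑' k : ℕ, (1 / (θ + (k : ℝ) + 1)) ^ 2) - 0 by ring]
  exact hcomb.congr heq

lemma tendsto_ratio (hθ : 0 < θ) :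
    Tendsto (fun n : ℕ => (θ + n) * (θ + n + 1) / ((n : ℝ) + 1) ^ 2) atTop (𝓝 1) := by
  have h1 : Tendsto (fun n : ℕ => (θ + n) / ((n : ℝ) + 1)) atTop (𝓝 1) := by
    have heq : ∀ᶠ n : ℕ in atTop, 1 + (θ - 1) / ((n : ℝ) + 1) = (θ + n) / ((n : ℝ) + 1) := by
      filter_upwards [Filter.eventually_ge_atTop 0] with n _
      have : ((n : ℝ) + 1) ≠ 0 := by positivity
      field_simp
      ring
    have hz : Tendsto (fun n : ℕ => (θ - 1) / ((n : ℝ) + 1)) atTop (𝓝 0) := by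
      have h1' : Tendsto (fun n : ℕ => (n : ℝ) + 1) atTop atTop :=
        Filter.tendsto_atTop_add_const_right _ _ tendsto_natCast_atTop_atTop
      have := tendsto_inv_atTop_zero.comp h1' |>.const_mul (θ - 1)
      simpa [div_eq_mul_inv] using this
    have := (tendsto_const_nhds (x := (1:ℝ)) (f := atTop)).add hz
    rw [add_zero] at this
    exact this.congr' heq
  have h2 : Tendsto (fun n : ℕ => (θ + n + 1) / ((n : ℝ) + 1)) atTop (𝓝 1) := by
    have heq : ∀ᶠ n : ℕ in atTop, 1 + θ / ((n : ℝ) + 1) = (θ + n + 1) / ((n : ℝ) + 1) := by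
      filter_upwards [Filter.eventually_ge_atTop 0] with n _
      have : ((n : ℝ) + 1) ≠ 0 := by positivity
      field_simp
      ring
    have hz : Tendsto (fun n : ℕ => θ / ((n : ℝ) + 1)) atTop (𝓝 0) := by
      have h1' : Tendsto (fun n : ℕ => (n : ℝ) + 1) atTop atTop :=
        Filter.tendsto_atTop_add_const_right _ _ tendsto_natCast_atTop_atTop
      have := tendsto_inv_atTop_zero.comp h1' |>.const_mul θ
      simpa [div_eq_mul_inv] using this
    have := (tendsto_const_nhds (x := (1:ℝ)) (f := atTop)).add hz
    rw [add_zero] at this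
    exact this.congr' heq
  have := h1.mul h2
  rw [mul_one] at this
  refine this.congr (fun n => ?_)
  have hne : ((n : ℝ) + 1) ≠ 0 := by positivity
  field_simp

end Limits

end HoppeAux

/-- Asymptotics of the variance of the internal path length of a Hoppe tree:
`Var(I_n) = (2/(θ+1) - Ψ₁(θ+1)) n² + o(n²)`, where
`Ψ₁(θ+1) = ∑_{k=1}^∞ 1/(θ+k)²` is the trigamma function at `θ + 1`. -/
theorem hoppe_path_length_variance
    {Ω : Type*} [MeasurableSpace Ω]
    (θ : ℝ) (hθ : 0 < θ)
    (μ : Measure Ω) [IsProbabilityMeasure μ] (U : ℕ → Ω → ℕ) (hU : IsHoppeParents θ μ U) :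
    Tendsto (fun n : ℕ =>
        variance (fun ω => (hoppePathLength U ω n : ℝ)) μ / (n : ℝ) ^ 2)
      atTop (𝓝 (2 / (θ + 1) - ∑' k : ℕ, (1 / (θ + (k : ℝ) + 1)) ^ 2)) := by
  refine (tendsto_add_atTop_iff_nat 1).1 ?_
  have hL := HoppeAux.tendsto_Ss (θ := θ) hθ
  have hratio := HoppeAux.tendsto_ratio (θ := θ) hθ
  have hmul := hL.mul hratio
  rw [mul_one] at hmul
  refine hmul.congr (fun n => ?_)
  rw [HoppeAux.variance_closed hU hθ n]
  push_cast
  ring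

end
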